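/- Let S = ⊕_{(a,b) ∈ N²} S_{(a,b)} be a Noetherian bigraded ring with S_{(0,0)} = A a Noetherian ring, and let M = ⊕_{(a,b)} M_{(a,b)} be a finitely generated bigraded S-module. Then the set ⋃_{(a,b) ∈ N²} Ass_A(M_{(a,b)}) of associated primes over A of all bigraded components of M is finite. -/

import Mathlib

/-- Associated primes of a module are associated to a submodule or the quotient. -/
theorem assPrimes_subset_union_quotient {R X : Type*} [CommRing R] [AddCommGroup X] [Module R X]
    (Y : Submodule R X) :
    associatedPrimes R X ⊆ associatedPrimes R Y ∪ associatedPrimes R (X ⧸ Y) := by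
  exact associatedPrimes.subset_union_of_exact Y.injective_subtype (LinearMap.exact_subtype_mkQ Y)

/-- Every associated prime (over `A`) of a cyclic `S`-module `S • x` whose `S`-annihilator is a
prime `P` equals the contraction of `P`. -/
theorem assPrimes_cyclic_subset {A S X : Type*} [CommRing A] [CommRing S] [Algebra A S]
    [AddCommGroup X] [Module S X] [Module A X] [IsScalarTower A S X]
    {P : Ideal S} (hP : P.IsPrime) {x : X} (hx : P = (Submodule.span S {x}).annihilator) :
    associatedPrimes A ((Submodule.span S {x}).restrictScalars A) ⊆
      {P.comap (algebraMap A S)} := by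
  rintro p ⟨hp, z, rfl⟩
  have hz : (z : X) ≠ 0 := by
    intro h0
    apply hp.ne_top
    rw [Ideal.eq_top_iff_one]
    apply Ideal.le_radical
    rw [Submodule.mem_colon_singleton, Submodule.mem_bot]
    ext
    show (1 : A) • (z : X) = 0
    rw [one_smul, h0]
  obtain ⟨s, hs⟩ := Submodule.mem_span_singleton.mp z.2
  have hsP : s ∉ P := by
    intro hsP
    apply hz
    rw [hx, Submodule.mem_annihilator_span_singleton] at hsP
    rw [← hs, hsP]
  rw [Set.mem_singleton_iff]
  have key : ∀ c : A, c ∈ (⊥ : Submodule A _).colon {z} ↔ algebraMap A S c ∈ P := by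
    intro c
    rw [Submodule.mem_colon_singleton, Submodule.mem_bot]
    show c • z = 0 ↔ algebraMap A S c ∈ P
    constructor
    · intro hc
      have hc' : (algebraMap A S c * s) • x = 0 := by
        have := congrArg Subtype.val hc
        have h2 : c • (z : X) = 0 := by simpa using this
        rw [← hs, ← algebraMap_smul S c (s • x), ← mul_smul] at h2
        exact h2
      have hmem : algebraMap A S c * s ∈ P := by
        rw [hx, Submodule.mem_annihilator_span_singleton]
        exact hc'
      exact (hP.mem_or_mem hmem).resolve_right hsP
    · intro hc
      rw [hx, Submodule.mem_annihilator_span_singleton] at hc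
      ext
      show c • (z : X) = 0
      rw [← hs, smul_comm, ← algebraMap_smul S c x, hc, smul_zero]
  ext c
  rw [Ideal.mem_radical_iff, Ideal.mem_comap]
  constructor
  · rintro ⟨n, hn⟩
    exact hP.mem_of_pow_mem n (by rw [← map_pow]; exact (key _).1 hn)
  · intro h
    exact ⟨1, by rw [pow_one]; exact (key c).2 h⟩

/-- If `M` is a finite module over a Noetherian ring `S` and `A → S` is a ring map, then the
associated primes of `M` over `A` form a finite set. -/
theorem assPrimes_finite_of_tower {A S M : Type*} [CommRing A] [CommRing S] [Algebra A S]
    [AddCommGroup M] [Module S M] [Module A M] [IsScalarTower A S M]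
    [IsNoetherianRing S] [Module.Finite S M] :
    (associatedPrimes A M).Finite := by
  have key : ∀ N : Submodule S M, (associatedPrimes A (M ⧸ N)).Finite := by
    have wf : WellFounded ((· > ·) : Submodule S M → Submodule S M → Prop) :=
      (isNoetherian_iff.mp inferInstance)
    intro N
    induction N using WellFounded.induction wf with
    | _ N IH =>
    rcases subsingleton_or_nontrivial (M ⧸ N) with hsub | hnt
    · rw [associatedPrimes.eq_empty_of_subsingleton]
      exact Set.finite_empty
    · obtain ⟨P, hP'⟩ := associatedPrimes.nonempty S (M ⧸ N)
      obtain ⟨hP, x, hx⟩ := isAssociatedPrime_iff.mp hP'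
      rw [Submodule.bot_colon'] at hx
      have hx0 : x ≠ 0 := by
        rintro rfl
        apply hP.ne_top
        rw [hx, Submodule.span_singleton_eq_bot.mpr rfl, Submodule.annihilator_bot]
      set N' : Submodule S M := (Submodule.span S {x}).comap N.mkQ with hN'def
      have hle : N ≤ N' := by
        intro m hm
        show N.mkQ m ∈ Submodule.span S {x}
        rw [Submodule.mkQ_apply, (Submodule.Quotient.mk_eq_zero N).mpr hm]
        exact Submodule.zero_mem _
      have hlt : N < N' := by
        obtain ⟨m, hm⟩ := N.mkQ_surjective x
        refine lt_of_le_of_ne hle fun hEq => ?_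
        have hmN' : m ∈ N' := by
          show N.mkQ m ∈ Submodule.span S {x}
          rw [hm]
          exact Submodule.mem_span_singleton_self x
        rw [← hEq] at hmN'
        exact hx0 (by rw [← hm, Submodule.mkQ_apply, Submodule.Quotient.mk_eq_zero]; exact hmN')
      have hfin' : (associatedPrimes A (M ⧸ N')).Finite := IH N' hlt
      -- identify (M⧸N)⧸span S {x} with M⧸N'
      have e1 : Submodule.map N.mkQ N' = Submodule.span S {x} :=
        Submodule.map_comap_eq_of_surjective N.mkQ_surjective _
      have equiv2 : ((M ⧸ N) ⧸ (Submodule.span S {x}).restrictScalars A) ≃ₗ[A] M ⧸ N' := by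
        have e : ((M ⧸ N) ⧸ Submodule.span S {x}) ≃ₗ[S] M ⧸ N' := by
          rw [← e1]; exact Submodule.quotientQuotientEquivQuotient N N' hle
        exact (Submodule.Quotient.restrictScalarsEquiv A (Submodule.span S {x})).trans
          (e.restrictScalars A)
      have hsub1 := assPrimes_subset_union_quotient
        (R := A) (X := M ⧸ N) ((Submodule.span S {x}).restrictScalars A)
      have hsub2 := assPrimes_cyclic_subset (A := A) hP hx
      refine Set.Finite.subset ((hfin'.union (Set.finite_singleton
        (P.comap (algebraMap A S)))).subset ?_) hsub1
      rintro p (hp | hp)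
      · exact Or.inr (hsub2 hp)
      · exact Or.inl ((LinearEquiv.AssociatedPrimes.eq equiv2) ▸ hp)
  have e : (M ⧸ (⊥ : Submodule S M)) ≃ₗ[A] M :=
    (Submodule.quotEquivOfEqBot (⊥ : Submodule S M) rfl).restrictScalars A
  exact (LinearEquiv.AssociatedPrimes.eq e) ▸ key ⊥

/-- West's lemma. Let `S` be a Noetherian `ℕ²`-bigraded ring whose
degree-`(0,0)` part is a Noetherian ring `A`, and let `M` be a finitely generated bigraded
`S`-module with components `M_{(a,b)}`.  Then `⋃_{(a,b)} Ass_A(M_{(a,b)})` is finite. -/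
theorem bigraded_associatedPrimes_finite
    {A S M : Type*} [CommRing A] [IsNoetherianRing A] [CommRing S] [Algebra A S]
    [AddCommGroup M] [Module S M] [Module A M] [IsScalarTower A S M]
    (𝒜 : ℕ × ℕ → Submodule A S) (ℳ : ℕ × ℕ → Submodule A M)
    [GradedAlgebra 𝒜] [DirectSum.Decomposition ℳ] [SetLike.GradedSMul 𝒜 ℳ]
    (hzero : 𝒜 0 = (1 : Submodule A S))
    [IsNoetherianRing S] [Module.Finite S M] :
    (⋃ p : ℕ × ℕ, associatedPrimes A (ℳ p)).Finite := by
  refine Set.Finite.subset (assPrimes_finite_of_tower (A := A) (S := S) (M := M)) ?_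
  refine Set.iUnion_subset fun q => ?_
  exact associatedPrimes.subset_of_injective (Submodule.injective_subtype _)
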